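/- If a vertex u has no outgoing edges, then for any seed s ≠ u and any blocker set B not containing u, the decrease in expected spread from additionally blocking u equals exactly the activation probability of u: E(s, G[V\B]) − E(s, G[V\(B∪{u})]) = P^{G[V\B]}(u, s). -/

import Mathlib

/-!
Independent cascade model via random sampled (live-edge) graphs.
-/

open Finset

noncomputable section
open scoped Classical

variable {V : Type*}

/-- Probability weight of a sampled graph `ω`. -/
def sampleWeight [Fintype V] (p : V → V → ℝ) (ω : V → V → Bool) : ℝ :=
  ∏ u : V, ∏ v : V, if ω u v then p u v else 1 - p u v

/-- Reachability from `s` to `w` in the sampled graph `ω`, through vertices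
outside the blocker set `B`. -/
def ReachB (ω : V → V → Bool) (B : Finset V) (s w : V) : Prop :=
  Relation.ReflTransGen (fun a b => ω a b = true ∧ a ∉ B ∧ b ∉ B) s w

/-- Number of vertices reachable from the seed set `S` in the sampled graph `ω`
restricted to `V \ B`. -/
def sigmaB [Fintype V] (ω : V → V → Bool) (B S : Finset V) : ℕ :=
  (Finset.univ.filter fun w => ∃ s ∈ S, ReachB ω B s w).card

/-- Expected spread of seed set `S` when the blocker set `B` is removed. -/
def spread [Fintype V] (p : V → V → ℝ) (S B : Finset V) : ℝ :=
  ∑ ω : V → V → Bool, sampleWeight p ω * (sigmaB ω B S : ℝ)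

/-- `actProb p s B u` = `P^{G[V\B]}(u, s)`: the probability that `u` is
activated by the seed `s` in the graph with blocker set `B` removed. -/
def actProb [Fintype V] (p : V → V → ℝ) (s : V) (B : Finset V) (u : V) : ℝ :=
  ∑ ω : V → V → Bool, sampleWeight p ω * (if ReachB ω B s u then 1 else 0)

/-- if a vertex `u` has no outgoing edges, then for any seed
`s ≠ u` and any blocker set `B` (not containing `u` or `s`), the decrease in
expected spread from additionally blocking `u` equals exactly the activation
probability of `u`:
`E(s, G[V\B]) - E(s, G[V\(B ∪ {u})]) = P^{G[V\B]}(u, s)`. -/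
theorem spread_decrease_sink_eq_actProb [Fintype V] (p : V → V → ℝ)
    (hp : ∀ u v, 0 ≤ p u v ∧ p u v ≤ 1)
    (s u : V) (B : Finset V) (hsink : ∀ v, p u v = 0)
    (hsu : s ≠ u) (huB : u ∉ B) (hsB : s ∉ B) :
    spread p {s} B - spread p {s} (B ∪ {u}) = actProb p s B u := by
  unfold spread actProb
  rw [← Finset.sum_sub_distrib]
  refine Finset.sum_congr rfl fun ω _ => ?_
  by_cases hout : ∃ v, ω u v = true
  · -- weight is zero
    have hw : sampleWeight p ω = 0 := by
      obtain ⟨v, hv⟩ := hout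
      unfold sampleWeight
      apply Finset.prod_eq_zero (Finset.mem_univ u)
      apply Finset.prod_eq_zero (Finset.mem_univ v)
      simp [hv, hsink v]
    simp [hw]
  · push_neg at hout
    have hout' : ∀ v, ω u v = false := fun v => by
      have := hout v; exact Bool.eq_false_iff.mpr this
    -- key reachability equivalence
    have key : ∀ w, ReachB ω (B ∪ {u}) s w ↔ ReachB ω B s w ∧ w ≠ u := by
      intro w
      constructor
      · intro h
        constructor
        · exact Relation.ReflTransGen.mono (p := fun a b => ω a b = true ∧ a ∉ B ∧ b ∉ B)
            (fun a b hab => ⟨hab.1, fun hA => hab.2.1 (Finset.mem_union_left _ hA),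
              fun hB => hab.2.2 (Finset.mem_union_left _ hB)⟩) _ _ h
        · cases h with
          | refl => exact hsu
          | tail _ hlast =>
            intro hwu
            exact hlast.2.2 (Finset.mem_union_right _ (by simp [hwu]))
      · rintro ⟨h, hwu⟩
        induction h with
        | refl => exact Relation.ReflTransGen.refl
        | @tail b c hsb hbc ih =>
          have hbu : b ≠ u := fun hb => by
            have := hbc.1; rw [hb, hout' c] at this; exact Bool.false_ne_true this
          have hb' : ReachB ω (B ∪ {u}) s b := ih hbu
          exact hb'.tail ⟨hbc.1,
            by simp [Finset.mem_union, hbc.2.1, hbu],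
            by simp [Finset.mem_union, hbc.2.2, hwu]⟩
    -- sigmaB relation
    have hsig : (sigmaB ω B {s} : ℝ) =
        (sigmaB ω (B ∪ {u}) {s} : ℝ) + (if ReachB ω B s u then 1 else 0) := by
      unfold sigmaB
      have hsimp : ∀ (C : Finset V),
          (Finset.univ.filter fun w => ∃ s' ∈ ({s} : Finset V), ReachB ω C s' w)
            = Finset.univ.filter fun w => ReachB ω C s w := by
        intro C; apply Finset.filter_congr; intro w _; simp
      rw [hsimp, hsimp]
      by_cases hru : ReachB ω B s u
      · have : (Finset.univ.filter fun w => ReachB ω B s w)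
            = insert u (Finset.univ.filter fun w => ReachB ω (B ∪ {u}) s w) := by
          ext w
          simp only [Finset.mem_insert, Finset.mem_filter, Finset.mem_univ, true_and, key]
          constructor
          · intro hw
            by_cases hwu : w = u
            · exact Or.inl hwu
            · exact Or.inr ⟨hw, hwu⟩
          · rintro (rfl | ⟨hw, _⟩)
            · exact hru
            · exact hw
        rw [this, Finset.card_insert_of_notMem (by simp only [Finset.mem_filter, Finset.mem_univ, true_and, key]; simp), if_pos hru]
        push_cast; ring
      · have : (Finset.univ.filter fun w => ReachB ω B s w)
            = Finset.univ.filter fun w => ReachB ω (B ∪ {u}) s w := by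
          apply Finset.filter_congr; intro w _
          rw [key]
          constructor
          · intro hw
            refine ⟨hw, fun hwu => hru (hwu ▸ hw)⟩
          · exact fun h => h.1
        rw [this, if_neg hru, add_zero]
      done
    rw [hsig]; ring
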